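/- arXiv:1307.6487 — 3 statements merged into one kernel-verified Lean document; each statement's English description precedes it below -/
import Mathlib

section
/- Let s_i and s_j be adjacent simple transpositions in S_n and let x ∈ D^{S_n}_{i,j}. Then exactly one of the two permutations s_i x and s_j x lies in D^{S_n}_{j,i}. -/
/-! ## Standard Young tableaux, encoded by entry positions

A filling with `n` entries is a function `p : ℕ → ℕ × ℕ` where `p k` is the
(row, column) position (0-indexed, rows increasing downwards) of the entry
numbered `k + 1`; only the values `p 0, …, p (n-1)` are relevant. -/

/-- `p` is a standard Young tableau with `n` boxes: the positions of the
entries are distinct and every initial segment of positions forms a Young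
diagram (a lower set in `ℕ × ℕ`); this is equivalent to the shape being a
Young diagram with entries strictly increasing along rows and columns. -/
def IsSYT (n : ℕ) (p : ℕ → ℕ × ℕ) : Prop :=
  Set.InjOn p (Set.Iio n) ∧
  ∀ k < n, IsLowerSet {q : ℕ × ℕ | ∃ j ≤ k, p j = q}

/-- The shape (set of boxes) of a filling with `n` entries. -/
def shapeYT (n : ℕ) (p : ℕ → ℕ × ℕ) : Set (ℕ × ℕ) :=
  p '' Set.Iio n

/-- The τ-invariant of a filling: `i ∈ tauYT n p` encodes the simple
transposition `s_(i+1)` (indices shifted down by one throughout), and holds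
when the entry indexed `i + 1` lies in a strictly lower row than the entry
indexed `i`. -/
def tauYT (n : ℕ) (p : ℕ → ℕ × ℕ) : Set ℕ :=
  {i | i + 1 < n ∧ (p i).1 < (p (i + 1)).1}

/-- Exchange the entries indexed `i` and `i + 1` (the action of the simple
transposition `s_(i+1)` on fillings). -/
def swapEntries (i : ℕ) (p : ℕ → ℕ × ℕ) : ℕ → ℕ × ℕ :=
  p ∘ Equiv.swap i (i + 1)

/-- Two simple transpositions indexed by `i` and `j` are adjacent. -/
def Adjacent (i j : ℕ) : Prop := i = j + 1 ∨ j = i + 1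

/-- `D^YT_{i,j}`: standard Young tableaux whose τ-invariant contains `i` but
not `j`. -/
def DYT (n i j : ℕ) (p : ℕ → ℕ × ℕ) : Prop :=
  IsSYT n p ∧ i ∈ tauYT n p ∧ j ∉ tauYT n p

open Classical in
/-- `f^YT_{i,j}` : the unique one of `s_i · Y`, `s_j · Y` that is a standard
tableau lying in `D^YT_{j,i}` (junk outside the intended domain). -/
noncomputable def fYT (n i j : ℕ) (p : ℕ → ℕ × ℕ) : ℕ → ℕ × ℕ :=
  if DYT n j i (swapEntries i p) then swapEntries i p else swapEntries j p

/-- A column superstandard tableau: the columns are filled consecutively,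
`1, …, c₁` down the first column, then `c₁+1, …, c₁+c₂` down the second
column, and so on. -/
def IsColSuperstandard (n : ℕ) (p : ℕ → ℕ × ℕ) : Prop :=
  IsSYT n p ∧ (0 < n → p 0 = (0, 0)) ∧
  ∀ k, k + 1 < n →
    p (k + 1) = ((p k).1 + 1, (p k).2) ∨ p (k + 1) = (0, (p k).2 + 1)

/-- Generalized τ-equivalence to order `m` on fillings. -/
def approxYT (n : ℕ) : ℕ → (ℕ → ℕ × ℕ) → (ℕ → ℕ × ℕ) → Prop
  | 0, p, q => tauYT n p = tauYT n q
  | m + 1, p, q => approxYT n m p q ∧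
      ∀ i j, Adjacent i j → i + 1 < n → j + 1 < n →
        DYT n i j p → DYT n i j q →
        approxYT n m (fYT n i j p) (fYT n i j q)

/-! ## Permutations -/

/-- The τ-invariant of a permutation of `{0, …, n-1}` (one-line notation
`x 0, x 1, …, x (n-1)`): `i ∈ tauSn x` encodes the simple transposition
`s_(i+1)`, and holds iff the value `i + 1` appears to the left of the value
`i`; equivalently `ℓ(s_(i+1) x) < ℓ(x)`. -/
def tauSn {n : ℕ} (x : Equiv.Perm (Fin n)) : Set ℕ :=
  {i | ∃ h : i + 1 < n, x⁻¹ ⟨i + 1, h⟩ < x⁻¹ ⟨i, Nat.lt_of_succ_lt h⟩}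

/-- Left multiplication by the simple transposition exchanging the values
`i` and `i + 1`. -/
def simpleMul {n : ℕ} (i : ℕ) (x : Equiv.Perm (Fin n)) : Equiv.Perm (Fin n) :=
  if h : i + 1 < n then
    Equiv.swap (⟨i, Nat.lt_of_succ_lt h⟩ : Fin n) ⟨i + 1, h⟩ * x
  else x

/-- `D^{S_n}_{i,j}`: permutations whose τ-invariant contains `i` but not `j`. -/
def DSn {n : ℕ} (i j : ℕ) (x : Equiv.Perm (Fin n)) : Prop :=
  i ∈ tauSn x ∧ j ∉ tauSn x

open Classical in
/-- `f^{S_n}_{i,j}` : the unique one of `s_i x`, `s_j x` lying in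
`D^{S_n}_{j,i}` (junk outside the intended domain). -/
noncomputable def fSn {n : ℕ} (i j : ℕ) (x : Equiv.Perm (Fin n)) : Equiv.Perm (Fin n) :=
  if DSn j i (simpleMul i x) then simpleMul i x else simpleMul j x

/-- Generalized τ-equivalence to order `m` on permutations. -/
def approxSn {n : ℕ} : ℕ → Equiv.Perm (Fin n) → Equiv.Perm (Fin n) → Prop
  | 0, x, y => tauSn x = tauSn y
  | m + 1, x, y => approxSn m x y ∧
      ∀ i j, Adjacent i j → i + 1 < n → j + 1 < n →
        DSn i j x → DSn i j y → approxSn m (fSn i j x) (fSn i j y)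

/-- `v` lies strictly between `u` and `w`. -/
def Between {n : ℕ} (u v w : Fin n) : Prop :=
  (u < v ∧ v < w) ∨ (w < v ∧ v < u)

/-- `x` and `y` are related by a dual Knuth step of type `a + 2` (with our
0-indexed values, `a`, `a+1`, `a+2` play the roles of `i-1`, `i`, `i+1`):
their one-line notations differ either by transposing the values `a+1` and
`a+2` with the value `a` appearing between them, or by transposing the
values `a` and `a+1` with the value `a+2` appearing between them. -/
def DualKnuthStep {n : ℕ} (a : ℕ) (x y : Equiv.Perm (Fin n)) : Prop :=
  ∃ h : a + 2 < n,
    (y = simpleMul (a + 1) x ∧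
      Between (x⁻¹ ⟨a + 1, Nat.lt_of_succ_lt h⟩)
        (x⁻¹ ⟨a, Nat.lt_of_succ_lt (Nat.lt_of_succ_lt h)⟩)
        (x⁻¹ ⟨a + 2, h⟩)) ∨
    (y = simpleMul a x ∧
      Between (x⁻¹ ⟨a, Nat.lt_of_succ_lt (Nat.lt_of_succ_lt h)⟩)
        (x⁻¹ ⟨a + 2, h⟩)
        (x⁻¹ ⟨a + 1, Nat.lt_of_succ_lt h⟩))

/-! ## The Robinson–Schensted correspondence -/

/-- Schensted row-bumping: insert the value `v` into the given rows,
returning the new rows together with the index of the row where a new box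
was created. -/
def bump : List (List ℕ) → ℕ → List (List ℕ) × ℕ
  | [], v => ([[v]], 0)
  | r :: rs, v =>
    match r.findIdx? (fun a => decide (v < a)) with
    | none => ((r ++ [v]) :: rs, 0)
    | some c =>
      let out := bump rs (r.getD c 0)
      ((r.set c v) :: out.1, out.2 + 1)

/-- Append the value `k` at the end of row `r` (creating a new row at the
bottom if necessary). -/
def addAt (Q : List (List ℕ)) (r k : ℕ) : List (List ℕ) :=
  if r < Q.length then Q.set r ((Q.getD r []) ++ [k]) else Q ++ [[k]]

/-- Run the Robinson–Schensted algorithm on the one-line word of `x`,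
producing the insertion and recording tableaux as lists of rows (all values
0-indexed). -/
def RSrows {n : ℕ} (x : Equiv.Perm (Fin n)) : List (List ℕ) × List (List ℕ) :=
  (List.finRange n).foldl
    (fun PQ k =>
      let out := bump PQ.1 (x k : ℕ)
      (out.1, addAt PQ.2 out.2 (k : ℕ)))
    ([], [])

/-- The (row, column) position of the value `k` in a list of rows. -/
def posIn (rows : List (List ℕ)) (k : ℕ) : ℕ × ℕ :=
  (rows.findIdx (fun r => r.contains k),
   (rows.getD (rows.findIdx (fun r => r.contains k)) []).idxOf k)

/-- The insertion tableau `P(x)`, as a position function. -/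
def Ptab {n : ℕ} (x : Equiv.Perm (Fin n)) : ℕ → ℕ × ℕ :=
  fun k => posIn (RSrows x).1 k

/-- The recording tableau `Q(x)`, as a position function. -/
def Qtab {n : ℕ} (x : Equiv.Perm (Fin n)) : ℕ → ℕ × ℕ :=
  fun k => posIn (RSrows x).2 k

/-- Generalized τ-equivalence to order `m` between a permutation and a
filling. -/
def approxMixed {n : ℕ} : ℕ → Equiv.Perm (Fin n) → (ℕ → ℕ × ℕ) → Prop
  | 0, x, p => tauSn x = tauYT n p
  | m + 1, x, p => approxMixed m x p ∧
      ∀ i j, Adjacent i j → i + 1 < n → j + 1 < n →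
        DSn i j x → DYT n i j p →
        approxMixed m (fSn i j x) (fYT n i j p)

/-- Sequences of `f^YT`-moves: `ChainDefined n L p` says the sequence of
maps given by `L` is defined on `p`, i.e. each intermediate tableau lies in
the domain of the next map. -/
def ChainDefined (n : ℕ) : List (ℕ × ℕ) → (ℕ → ℕ × ℕ) → Prop
  | [], _ => True
  | ij :: L, p =>
      Adjacent ij.1 ij.2 ∧ ij.1 + 1 < n ∧ ij.2 + 1 < n ∧ DYT n ij.1 ij.2 p ∧
      ChainDefined n L (fYT n ij.1 ij.2 p)

/-- Apply a sequence of `f^YT`-moves. -/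
noncomputable def applySeq (n : ℕ) (L : List (ℕ × ℕ)) (p : ℕ → ℕ × ℕ) : ℕ → ℕ × ℕ :=
  L.foldl (fun q ij => fYT n ij.1 ij.2 q) p

private lemma inv_simpleMul {n : ℕ} (i : ℕ) (h : i + 1 < n) (x : Equiv.Perm (Fin n))
    (k : Fin n) :
    (simpleMul i x)⁻¹ k = x⁻¹ (Equiv.swap ⟨i, Nat.lt_of_succ_lt h⟩ ⟨i + 1, h⟩ k) := by
  simp [simpleMul, dif_pos h, mul_inv_rev, Equiv.swap_inv, Equiv.Perm.mul_apply]

private lemma mem_tau_iff {n : ℕ} (x : Equiv.Perm (Fin n)) (i : ℕ) (h : i + 1 < n) :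
    i ∈ tauSn x ↔ x⁻¹ ⟨i + 1, h⟩ < x⁻¹ ⟨i, Nat.lt_of_succ_lt h⟩ := by
  constructor
  · rintro ⟨h', hh⟩; exact hh
  · intro hh; exact ⟨h, hh⟩

/-- For adjacent simple transpositions `s_i`, `s_j` in `S_n`
and `x ∈ D^{S_n}_{i,j}`, exactly one of `s_i x` and `s_j x` lies in
`D^{S_n}_{j,i}`. -/
theorem stmt8 {n : ℕ} (i j : ℕ) (hadj : Adjacent i j) (hi : i + 1 < n)
    (hj : j + 1 < n) (x : Equiv.Perm (Fin n)) (hx : DSn i j x) :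
    (DSn j i (simpleMul i x) ∧ ¬ DSn j i (simpleMul j x)) ∨
    (DSn j i (simpleMul j x) ∧ ¬ DSn j i (simpleMul i x)) := by
  obtain ⟨hxi, hxj⟩ := hx
  rcases hadj with h | h
  · -- i = j + 1
    subst h
    have hk2 : j + 2 < n := hi
    have hk1 : j + 1 < n := hj
    have hk0 : j < n := Nat.lt_of_succ_lt hk1
    set a := x⁻¹ ⟨j, hk0⟩ with ha
    set b := x⁻¹ ⟨j + 1, hk1⟩ with hb
    set c := x⁻¹ ⟨j + 1 + 1, hk2⟩ with hc
    have hcb : c < b := (mem_tau_iff x (j + 1) hk2).mp hxi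
    have hab : a < b := by
      have hne : a ≠ b := fun e => by
        have := x⁻¹.injective e
        simp only [Fin.mk.injEq] at this
        omega
      have := (mem_tau_iff x j hk1).not.mp hxj
      omega
    have hne : a ≠ c := fun e => by
      have := x⁻¹.injective e
      simp only [Fin.mk.injEq] at this
      omega
    -- positions after multiplying by s_{j+1} (= s_i), which swaps values j+1, j+2
    have e1a : (simpleMul (j + 1) x)⁻¹ ⟨j, hk0⟩ = a := by
      rw [inv_simpleMul (j + 1) hk2 x, ha]
      congr 1
      exact Equiv.swap_apply_of_ne_of_ne
        (by simp only [ne_eq, Fin.mk.injEq]; omega)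
        (by simp only [ne_eq, Fin.mk.injEq]; omega)
    have e1b : (simpleMul (j + 1) x)⁻¹ ⟨j + 1, hk1⟩ = c := by
      rw [inv_simpleMul (j + 1) hk2 x, hc]
      congr 1
      exact Equiv.swap_apply_left _ _
    have e1c : (simpleMul (j + 1) x)⁻¹ ⟨j + 1 + 1, hk2⟩ = b := by
      rw [inv_simpleMul (j + 1) hk2 x, hb]
      congr 1
      exact Equiv.swap_apply_right _ _
    -- positions after multiplying by s_j, which swaps values j, j+1
    have e2a : (simpleMul j x)⁻¹ ⟨j, hk0⟩ = b := by
      rw [inv_simpleMul j hk1 x, hb]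
      congr 1
      exact Equiv.swap_apply_left _ _
    have e2b : (simpleMul j x)⁻¹ ⟨j + 1, hk1⟩ = a := by
      rw [inv_simpleMul j hk1 x, ha]
      congr 1
      exact Equiv.swap_apply_right _ _
    have e2c : (simpleMul j x)⁻¹ ⟨j + 1 + 1, hk2⟩ = c := by
      rw [inv_simpleMul j hk1 x, hc]
      congr 1
      exact Equiv.swap_apply_of_ne_of_ne
        (by simp only [ne_eq, Fin.mk.injEq]; omega)
        (by simp only [ne_eq, Fin.mk.injEq]; omega)
    have d1 : DSn j (j + 1) (simpleMul (j + 1) x) ↔ c < a := by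
      unfold DSn
      rw [mem_tau_iff _ j hk1, mem_tau_iff _ (j + 1) hk2, e1a, e1b, e1c]
      constructor
      · exact fun hh => hh.1
      · exact fun hh => ⟨hh, by omega⟩
    have d2 : DSn j (j + 1) (simpleMul j x) ↔ a < c := by
      unfold DSn
      rw [mem_tau_iff _ j hk1, mem_tau_iff _ (j + 1) hk2, e2a, e2b, e2c]
      constructor
      · exact fun hh => by
          have := hh.2
          omega
      · exact fun hh => ⟨hab, by omega⟩
    rcases lt_or_gt_of_ne hne with hlt | hlt
    · exact Or.inr ⟨d2.mpr hlt, fun hh => by have := d1.mp hh; omega⟩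
    · exact Or.inl ⟨d1.mpr hlt, fun hh => by have := d2.mp hh; omega⟩
  · -- j = i + 1
    subst h
    have hk2 : i + 2 < n := hj
    have hk1 : i + 1 < n := hi
    have hk0 : i < n := Nat.lt_of_succ_lt hk1
    set a := x⁻¹ ⟨i, hk0⟩ with ha
    set b := x⁻¹ ⟨i + 1, hk1⟩ with hb
    set c := x⁻¹ ⟨i + 1 + 1, hk2⟩ with hc
    have hba : b < a := (mem_tau_iff x i hk1).mp hxi
    have hbc : b < c := by
      have hne : b ≠ c := fun e => by
        have := x⁻¹.injective e
        simp only [Fin.mk.injEq] at this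
        omega
      have := (mem_tau_iff x (i + 1) hk2).not.mp hxj
      omega
    have hne : a ≠ c := fun e => by
      have := x⁻¹.injective e
      simp only [Fin.mk.injEq] at this
      omega
    -- s_i swaps values i, i+1
    have e1a : (simpleMul i x)⁻¹ ⟨i, hk0⟩ = b := by
      rw [inv_simpleMul i hk1 x, hb]
      congr 1
      exact Equiv.swap_apply_left _ _
    have e1b : (simpleMul i x)⁻¹ ⟨i + 1, hk1⟩ = a := by
      rw [inv_simpleMul i hk1 x, ha]
      congr 1
      exact Equiv.swap_apply_right _ _
    have e1c : (simpleMul i x)⁻¹ ⟨i + 1 + 1, hk2⟩ = c := by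
      rw [inv_simpleMul i hk1 x, hc]
      congr 1
      exact Equiv.swap_apply_of_ne_of_ne
        (by simp only [ne_eq, Fin.mk.injEq]; omega)
        (by simp only [ne_eq, Fin.mk.injEq]; omega)
    -- s_{i+1} swaps values i+1, i+2
    have e2a : (simpleMul (i + 1) x)⁻¹ ⟨i, hk0⟩ = a := by
      rw [inv_simpleMul (i + 1) hk2 x, ha]
      congr 1
      exact Equiv.swap_apply_of_ne_of_ne
        (by simp only [ne_eq, Fin.mk.injEq]; omega)
        (by simp only [ne_eq, Fin.mk.injEq]; omega)
    have e2b : (simpleMul (i + 1) x)⁻¹ ⟨i + 1, hk1⟩ = c := by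
      rw [inv_simpleMul (i + 1) hk2 x, hc]
      congr 1
      exact Equiv.swap_apply_left _ _
    have e2c : (simpleMul (i + 1) x)⁻¹ ⟨i + 1 + 1, hk2⟩ = b := by
      rw [inv_simpleMul (i + 1) hk2 x, hb]
      congr 1
      exact Equiv.swap_apply_right _ _
    have d1 : DSn (i + 1) i (simpleMul i x) ↔ c < a := by
      unfold DSn
      rw [mem_tau_iff _ i hk1, mem_tau_iff _ (i + 1) hk2, e1a, e1b, e1c]
      constructor
      · exact fun hh => hh.1
      · exact fun hh => ⟨hh, by omega⟩
    have d2 : DSn (i + 1) i (simpleMul (i + 1) x) ↔ a < c := by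
      unfold DSn
      rw [mem_tau_iff _ i hk1, mem_tau_iff _ (i + 1) hk2, e2a, e2b, e2c]
      constructor
      · exact fun hh => by
          have := hh.2
          omega
      · exact fun hh => ⟨hbc, by omega⟩
    rcases lt_or_gt_of_ne hne with hlt | hlt
    · exact Or.inr ⟨d2.mpr hlt, fun hh => by have := d1.mp hh; omega⟩
    · exact Or.inl ⟨d1.mpr hlt, fun hh => by have := d2.mp hh; omega⟩
end

section
/- Let s_i and s_j be adjacent simple transpositions in S_n and let x ∈ D^{S_n}_{i,j}. Then x and f^{S_n}_{i,j}(x) are related by a dual Knuth step of type k, where k is the larger of i and j. -/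
lemma simpleMul_inv_val {n k : ℕ} (hk : k + 1 < n) (x : Equiv.Perm (Fin n)) (v : ℕ)
    (hv : v < n) :
    (simpleMul k x)⁻¹ ⟨v, hv⟩ =
      x⁻¹ (if v = k then ⟨k + 1, hk⟩ else if v = k + 1 then ⟨k, Nat.lt_of_succ_lt hk⟩
        else ⟨v, hv⟩) := by
  rw [simpleMul, dif_pos hk, mul_inv_rev, Equiv.swap_inv, Equiv.Perm.mul_apply]
  congr 1
  split_ifs with h1 h2
  · subst h1; exact Equiv.swap_apply_left _ _
  · subst h2; exact Equiv.swap_apply_right _ _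
  · exact Equiv.swap_apply_of_ne_of_ne (Fin.ne_of_val_ne h1) (Fin.ne_of_val_ne h2)

/-- For adjacent simple transpositions `s_i`, `s_j` and
`x ∈ D^{S_n}_{i,j}`, the permutations `x` and `f^{S_n}_{i,j}(x)` are related
by a dual Knuth step of type `k = max i j` (paper indexing); in our 0-shifted
conventions this is `DualKnuthStep (min i j)`. -/
theorem stmt11 {n : ℕ} (i j : ℕ) (hadj : Adjacent i j) (hi : i + 1 < n)
    (hj : j + 1 < n) (x : Equiv.Perm (Fin n)) (hx : DSn i j x) :
    DualKnuthStep (min i j) x (fSn i j x) := by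
  obtain ⟨hxi, hxj⟩ := hx
  rcases hadj with h | h
  · -- i = j + 1, so a = j; A = pos j, B = pos (j+1), C = pos (j+2)
    subst h
    obtain ⟨h2n, hCB⟩ := hxi
    have hAB : x⁻¹ ⟨j, Nat.lt_of_succ_lt hj⟩ < x⁻¹ ⟨j + 1, hj⟩ := by
      rcases lt_trichotomy (x⁻¹ ⟨j, Nat.lt_of_succ_lt hj⟩) (x⁻¹ ⟨j + 1, hj⟩) with h' | h' | h'
      · exact h'
      · exfalso
        have h2 := Equiv.injective x⁻¹ h'
        simp only [Fin.mk.injEq] at h2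
        omega
      · exact absurd ⟨hj, h'⟩ hxj
    have hACne : x⁻¹ ⟨j, Nat.lt_of_succ_lt hj⟩ ≠ x⁻¹ ⟨j + 1 + 1, hi⟩ := fun h' => by
      have h2 := Equiv.injective x⁻¹ h'
      simp only [Fin.mk.injEq] at h2
      omega
    rw [min_eq_right (Nat.le_succ j)]
    refine ⟨hi, ?_⟩
    rcases hACne.lt_or_gt with hAC | hCA
    · -- A < C < B : fSn = simpleMul j x
      have hcond : ¬ DSn j (j + 1) (simpleMul (j + 1) x) := by
        rintro ⟨⟨h1, hlt⟩, -⟩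
        rw [simpleMul_inv_val hi x (j + 1) h1, simpleMul_inv_val hi x j (by omega),
          if_pos rfl, if_neg (by omega : ¬ j = j + 1),
          if_neg (by omega : ¬ j = j + 1 + 1)] at hlt
        exact lt_asymm hAC hlt
      have hf : fSn (j + 1) j x = simpleMul j x := by unfold fSn; rw [if_neg hcond]
      exact Or.inr ⟨hf, Or.inl ⟨hAC, hCB⟩⟩
    · -- C < A, B above both : fSn = simpleMul (j+1) x
      have hcond : DSn j (j + 1) (simpleMul (j + 1) x) := by
        constructor
        · refine ⟨hj, ?_⟩
          rw [simpleMul_inv_val hi x (j + 1) hj, simpleMul_inv_val hi x j (by omega),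
            if_pos rfl, if_neg (by omega : ¬ j = j + 1),
            if_neg (by omega : ¬ j = j + 1 + 1)]
          exact hCA
        · rintro ⟨h1, hlt⟩
          rw [simpleMul_inv_val hi x (j + 1 + 1) h1, simpleMul_inv_val hi x (j + 1) (by omega),
            if_neg (by omega : ¬ j + 1 + 1 = j + 1), if_pos rfl, if_pos rfl] at hlt
          exact lt_asymm hCB hlt
      have hf : fSn (j + 1) j x = simpleMul (j + 1) x := by unfold fSn; rw [if_pos hcond]
      exact Or.inl ⟨hf, Or.inr ⟨hCA, hAB⟩⟩
  · -- j = i + 1, so a = i; B < A and B < C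
    subst h
    obtain ⟨h1n, hBA⟩ := hxi
    have hBC : x⁻¹ ⟨i + 1, Nat.lt_of_succ_lt hj⟩ < x⁻¹ ⟨i + 1 + 1, hj⟩ := by
      rcases lt_trichotomy (x⁻¹ ⟨i + 1, Nat.lt_of_succ_lt hj⟩) (x⁻¹ ⟨i + 1 + 1, hj⟩)
        with h' | h' | h'
      · exact h'
      · exfalso
        have h2 := Equiv.injective x⁻¹ h'
        simp only [Fin.mk.injEq] at h2
        omega
      · exact absurd ⟨hj, h'⟩ hxj
    have hACne : x⁻¹ ⟨i, Nat.lt_of_succ_lt hi⟩ ≠ x⁻¹ ⟨i + 1 + 1, hj⟩ := fun h' => by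
      have h2 := Equiv.injective x⁻¹ h'
      simp only [Fin.mk.injEq] at h2
      omega
    rw [min_eq_left (Nat.le_succ i)]
    refine ⟨hj, ?_⟩
    rcases hACne.lt_or_gt with hAC | hCA
    · -- B < A < C : fSn = simpleMul (i+1) x
      have hcond : ¬ DSn (i + 1) i (simpleMul i x) := by
        rintro ⟨⟨h1, hlt⟩, -⟩
        rw [simpleMul_inv_val hi x (i + 1 + 1) h1, simpleMul_inv_val hi x (i + 1) (by omega),
          if_neg (by omega : ¬ i + 1 + 1 = i), if_neg (by omega : ¬ i + 1 + 1 = i + 1),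
          if_neg (by omega : ¬ i + 1 = i), if_pos rfl] at hlt
        exact lt_asymm hAC hlt
      have hf : fSn i (i + 1) x = simpleMul (i + 1) x := by unfold fSn; rw [if_neg hcond]
      exact Or.inl ⟨hf, Or.inl ⟨hBA, hAC⟩⟩
    · -- C < A : fSn = simpleMul i x
      have hcond : DSn (i + 1) i (simpleMul i x) := by
        constructor
        · refine ⟨hj, ?_⟩
          rw [simpleMul_inv_val hi x (i + 1 + 1) hj, simpleMul_inv_val hi x (i + 1) (by omega),
            if_neg (by omega : ¬ i + 1 + 1 = i), if_neg (by omega : ¬ i + 1 + 1 = i + 1),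
            if_neg (by omega : ¬ i + 1 = i), if_pos rfl]
          exact hCA
        · rintro ⟨h1, hlt⟩
          rw [simpleMul_inv_val hi x (i + 1) h1, simpleMul_inv_val hi x i (by omega),
            if_neg (by omega : ¬ i + 1 = i), if_pos rfl, if_pos rfl] at hlt
          exact lt_asymm hBA hlt
      have hf : fSn i (i + 1) x = simpleMul i x := by unfold fSn; rw [if_pos hcond]
      exact Or.inr ⟨hf, Or.inr ⟨hBC, hCA⟩⟩
end

section
/- For every x ∈ S_n and every 1 ≤ i ≤ n−1, the simple transposition s_i belongs to τ(x) if and only if s_i belongs to τ(P(x)); that is, i+1 appears to the left of i in the one-line notation of x if and only if i+1 lies in a strictly lower row than i in the insertion tableau P(x). Hence τ(x) = τ(P(x)). -/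
namespace Stmt14Aux
open List

/-- Row index of the value `k` in a list of rows. -/
def rowOf (rows : List (List ℕ)) (k : ℕ) : ℕ := rows.findIdx (fun r => r.contains k)

lemma posIn_fst (rows : List (List ℕ)) (k : ℕ) : (posIn rows k).1 = rowOf rows k := rfl

lemma rowOf_cons (r : List ℕ) (rs : List (List ℕ)) (k : ℕ) :
    rowOf (r :: rs) k = if k ∈ r then 0 else rowOf rs k + 1 := by
  simp only [rowOf, List.findIdx_cons]
  by_cases h : k ∈ r
  · simp [h]
  · simp [h]

lemma rowOf_nil (k : ℕ) : rowOf [] k = 0 := rfl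

/-- The freshly inserted value always lands in row 0. -/
lemma rowOf_bump_self (rows : List (List ℕ)) (v : ℕ) : rowOf (bump rows v).1 v = 0 := by
  cases rows with
  | nil => simp [bump, rowOf_cons]
  | cons r rs =>
    cases hf : r.findIdx? (fun a => decide (v < a)) with
    | none => simp [bump, hf, rowOf_cons]
    | some c =>
      obtain ⟨hc, -, -⟩ := List.findIdx?_eq_some_iff_getElem.1 hf
      have hv : v ∈ r.set c v := List.mem_set hc v
      simp [bump, hf, rowOf_cons, hv]

/-- The multiset of entries after bumping. -/
lemma bump_join_perm (rows : List (List ℕ)) (v : ℕ) :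
    (bump rows v).1.flatten ~ v :: rows.flatten := by
  induction rows generalizing v with
  | nil => simp [bump]
  | cons r rs ih =>
    cases hf : r.findIdx? (fun a => decide (v < a)) with
    | none => simpa [bump, hf] using List.perm_middle
    | some c =>
      obtain ⟨hc, -, -⟩ := List.findIdx?_eq_some_iff_getElem.1 hf
      have hgd : r.getD c 0 = r[c] := List.getD_eq_getElem r 0 hc
      have hset : r.set c v = r.take c ++ v :: r.drop (c + 1) := by
        simp [List.set_eq_take_append_cons_drop, hc]
      have hr : r = r.take c ++ r[c] :: r.drop (c + 1) := by
        conv_lhs => rw [← List.take_append_drop c r, List.drop_eq_getElem_cons hc]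
      simp only [bump, hf, List.flatten, hgd]
      calc (r.set c v) ++ (bump rs r[c]).1.flatten
          ~ (r.set c v) ++ (r[c] :: rs.flatten) := List.Perm.append_left _ (ih _)
        _ ~ r[c] :: ((r.set c v) ++ rs.flatten) := List.perm_middle
        _ ~ r[c] :: (v :: (r.take c ++ r.drop (c+1)) ++ rs.flatten) := by
              refine List.Perm.cons _ (List.Perm.append_right _ ?_)
              rw [hset]; exact List.perm_middle
        _ ~ v :: r[c] :: (r.take c ++ r.drop (c+1) ++ rs.flatten) := by
              rw [List.cons_append]; exact List.Perm.swap _ _ _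
        _ ~ v :: (r ++ rs.flatten) := by
              refine List.Perm.cons _ ?_
              rw [List.append_assoc]
              conv_rhs => rw [hr]
              rw [List.append_assoc, List.cons_append]
              exact List.perm_middle.symm

end Stmt14Aux
namespace Stmt14Aux
open List

lemma findIdx?_facts {r : List ℕ} {v c : ℕ}
    (hf : r.findIdx? (fun a => decide (v < a)) = some c) :
    c < r.length ∧ v < r[c]'(by
      exact (List.findIdx?_eq_some_iff_getElem.1 hf).1) ∧
    ∀ j (hj : j < c), r[j]'(by
      have h := List.findIdx?_eq_some_iff_getElem.1 hf
      exact hj.trans h.1) ≤ v := by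
  obtain ⟨hc, hpc, hlt⟩ := List.findIdx?_eq_some_iff_getElem.1 hf
  refine ⟨hc, by simpa using hpc, fun j hj => ?_⟩
  have := hlt j hj
  simpa using this

lemma mem_set_of_ne {r : List ℕ} {c k v : ℕ} (hc : c < r.length)
    (hk : k ∈ r) (hne : k ≠ r[c]) : k ∈ r.set c v := by
  obtain ⟨j, hj, hjk⟩ := List.mem_iff_getElem.1 hk
  have hjc : j ≠ c := by rintro rfl; exact hne hjk.symm
  refine List.mem_iff_getElem.2 ⟨j, by simpa using hj, ?_⟩
  rw [List.getElem_set]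
  simp [Ne.symm hjc, hjk]

lemma not_mem_set_self {r : List ℕ} {c v : ℕ} (hnd : r.Nodup) (hc : c < r.length)
    (hvc : v ≠ r[c]) : r[c] ∉ r.set c v := by
  intro hmem
  obtain ⟨j, hj, hjk⟩ := List.mem_iff_getElem.1 hmem
  rw [List.getElem_set] at hjk
  by_cases hjc : c = j
  · exact hvc (by simpa [hjc] using hjk)
  · rw [if_neg hjc] at hjk
    exact hjc ((hnd.getElem_inj_iff).1 hjk).symm

lemma mem_set_iff {r : List ℕ} {c k v : ℕ} (hc : c < r.length)
    (hkv : k ≠ v) (hkc : k ≠ r[c]) : k ∈ r.set c v ↔ k ∈ r := by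
  constructor
  · intro h
    rcases List.mem_or_eq_of_mem_set h with h | h
    · exact h
    · exact absurd h hkv
  · intro h
    exact mem_set_of_ne hc h hkc

lemma sorted_set {r : List ℕ} {c v : ℕ} (hs : List.Pairwise (· < ·) r)
    (hv : v ∉ r) (hc : c < r.length) (hcv : v < r[c])
    (hlow : ∀ j (hj : j < c), r[j]'(hj.trans hc) ≤ v) :
    List.Pairwise (· < ·) (r.set c v) := by
  rw [List.pairwise_iff_get] at hs ⊢
  intro a b hab
  simp only [List.get_eq_getElem, List.getElem_set] at *
  have ha := a.2; have hb := b.2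
  simp only [List.length_set] at ha hb
  by_cases hca : c = (a : ℕ)
  · rw [if_pos hca]
    by_cases hcb : c = (b : ℕ)
    · omega
    · rw [if_neg hcb]
      have : r[c] ≤ r[(b : ℕ)] := by
        rcases lt_or_eq_of_le (by omega : c ≤ (b : ℕ)) with h | h
        · exact le_of_lt (hs ⟨c, hc⟩ ⟨b, hb⟩ (by simpa using h))
        · simp [h]
      omega
  · rw [if_neg hca]
    by_cases hcb : c = (b : ℕ)
    · rw [if_pos hcb]
      have hac : (a : ℕ) < c := by omega
      have := hlow (a : ℕ) hac
      have hne : r[(a : ℕ)] ≠ v := fun h => hv (h ▸ List.getElem_mem _)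
      omega
    · rw [if_neg hcb]
      exact hs ⟨a, ha⟩ ⟨b, hb⟩ (by simpa using hab)

lemma bump_sorted {rows : List (List ℕ)} {v : ℕ}
    (hs : ∀ r ∈ rows, List.Pairwise (· < ·) r)
    (hnd : rows.flatten.Nodup) (hv : v ∉ rows.flatten) :
    ∀ r ∈ (bump rows v).1, List.Pairwise (· < ·) r := by
  induction rows generalizing v with
  | nil =>
    intro r hr
    simp only [bump, List.mem_singleton] at hr
    simp [hr]
  | cons r rs ih =>
    simp only [List.flatten_cons, List.nodup_append'] at hnd
    obtain ⟨hndr, hndrs, hdisj⟩ := hnd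
    simp only [List.flatten_cons, List.mem_append] at hv
    push_neg at hv
    cases hf : r.findIdx? (fun a => decide (v < a)) with
    | none =>
      intro q hq
      simp only [bump, hf] at hq
      rcases List.mem_cons.1 hq with h | h
      · subst h
        have hnone := List.findIdx?_eq_none_iff.1 hf
        rw [List.pairwise_append]
        refine ⟨hs r (List.mem_cons_self), List.pairwise_singleton _ v, ?_⟩
        intro a ha b hb
        rw [List.mem_singleton] at hb
        have h1 : ¬ (v < a) := by simpa using hnone a ha
        have h2 : a ≠ v := fun h => hv.1 (h ▸ ha)
        omega
      · exact hs _ (List.mem_cons_of_mem _ h)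
    | some c =>
      obtain ⟨hc, hcv, hlow⟩ := findIdx?_facts hf
      have hgd : r.getD c 0 = r[c] := List.getD_eq_getElem r 0 hc
      intro q hq
      simp only [bump, hf, hgd] at hq
      rcases List.mem_cons.1 hq with h | h
      · subst h
        refine sorted_set (hs r (List.mem_cons_self)) hv.1 hc hcv ?_
        intro j hj
        have h1 := hlow j hj
        exact h1
      · refine ih (fun q hq => hs q (List.mem_cons_of_mem _ hq)) hndrs ?_ _ h
        exact fun hmem => hdisj (List.getElem_mem _) hmem

end Stmt14Aux
namespace Stmt14Aux
open List

/-- Inserting `i` when `i` is fresh leaves `i+1` out of the first row. -/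
lemma one_le_rowOf_bump (rows : List (List ℕ)) (i : ℕ)
    (hs : ∀ r ∈ rows, List.Pairwise (· < ·) r) (hi : i ∉ rows.flatten) :
    1 ≤ rowOf (bump rows i).1 (i + 1) := by
  cases rows with
  | nil => simp [bump, rowOf_cons, rowOf_nil]
  | cons r rs =>
    simp only [List.flatten_cons, List.mem_append] at hi
    push_neg at hi
    have hsr : List.Pairwise (· < ·) r := hs r (List.mem_cons_self)
    by_cases hmem : i + 1 ∈ r
    · obtain ⟨c, hc, hrc⟩ := List.mem_iff_getElem.1 hmem
      have hf : r.findIdx? (fun a => decide (i < a)) = some c := by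
        refine List.findIdx?_eq_some_iff_getElem.2 ⟨hc, by simp [hrc], ?_⟩
        intro j hj
        have hlt : r[j]'(hj.trans hc) < r[c] := by
          have := List.pairwise_iff_get.1 hsr ⟨j, hj.trans hc⟩ ⟨c, hc⟩ (by simpa using hj)
          simpa using this
        have hne : r[j]'(hj.trans hc) ≠ i := fun h => hi.1 (h ▸ List.getElem_mem _)
        simp only [decide_eq_true_eq]
        omega
      have hgd : r.getD c 0 = r[c] := List.getD_eq_getElem r 0 hc
      have hnot : i + 1 ∉ r.set c i := by
        have := not_mem_set_self (v := i) hsr.nodup hc (by omega)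
        rwa [hrc] at this
      simp [bump, hf, hgd, rowOf_cons, hnot]
    · cases hf : r.findIdx? (fun a => decide (i < a)) with
      | none =>
        have : i + 1 ∉ r ++ [i] := by
          simp only [List.mem_append, List.mem_singleton]
          push_neg
          exact ⟨hmem, by omega⟩
        simp [bump, hf, rowOf_cons, this]
      | some c =>
        obtain ⟨hc, -, -⟩ := findIdx?_facts hf
        have hnot : i + 1 ∉ r.set c i := by
          intro h
          rcases List.mem_or_eq_of_mem_set h with h | h
          · exact hmem h
          · omega
        simp [bump, hf, rowOf_cons, hnot]

/-- The key preservation lemma: inserting a value `v ∉ {i, i+1}` does not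
change whether `i` lies strictly above `i+1`. -/
lemma bump_pres (rows : List (List ℕ)) (v i : ℕ)
    (hs : ∀ r ∈ rows, List.Pairwise (· < ·) r) (hnd : rows.flatten.Nodup)
    (hv : v ∉ rows.flatten) (hvi : v ≠ i) (hvi1 : v ≠ i + 1)
    (hi : i ∈ rows.flatten) (hi1 : i + 1 ∈ rows.flatten) :
    (rowOf (bump rows v).1 i < rowOf (bump rows v).1 (i + 1) ↔
      rowOf rows i < rowOf rows (i + 1)) := by
  induction rows generalizing v with
  | nil => simp at hi
  | cons r rs ih =>
    simp only [List.flatten_cons, List.nodup_append'] at hnd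
    obtain ⟨hndr, hndrs, hdisj⟩ := hnd
    simp only [List.flatten_cons, List.mem_append] at hv hi hi1
    push_neg at hv
    have hsr : List.Pairwise (· < ·) r := hs r (List.mem_cons_self)
    have hsrs : ∀ q ∈ rs, List.Pairwise (· < ·) q := fun q hq => hs q (List.mem_cons_of_mem _ hq)
    cases hf : r.findIdx? (fun a => decide (v < a)) with
    | none =>
      have h1 : i ≠ v := Ne.symm hvi
      have h2 : i + 1 ≠ v := Ne.symm hvi1
      simp only [bump, hf, rowOf_cons, List.mem_append, List.mem_singleton, h1, h2,
        or_false]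
    | some c =>
      obtain ⟨hc, hcv, hlow⟩ := findIdx?_facts hf
      have hgd : r.getD c 0 = r[c] := List.getD_eq_getElem r 0 hc
      have hra : r[c] ∈ r := List.getElem_mem hc
      by_cases hai : r[c] = i
      · -- the bumped value is `i`
        have hir : i ∈ r := hai ▸ hra
        have hirs : i ∉ rs.flatten := fun h => hdisj (hai ▸ hra) h
        have hinotset : i ∉ r.set c v := by
          have := not_mem_set_self (v := v) hndr hc (hai ▸ hvi)
          rwa [hai] at this
        have h0 : rowOf (bump rs r[c]).1 i = 0 := by
          rw [hai]; exact rowOf_bump_self rs i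
        by_cases hi1r : i + 1 ∈ r
        · have hi1set : i + 1 ∈ r.set c v :=
            mem_set_of_ne hc hi1r (by omega)
          simp [bump, hf, hgd, rowOf_cons, hinotset, hi1set, hir, hi1r]
        · have hi1rs : i + 1 ∈ rs.flatten := hi1.resolve_left hi1r
          have hB : 1 ≤ rowOf (bump rs r[c]).1 (i + 1) := by
            rw [hai]; exact one_le_rowOf_bump rs i hsrs hirs
          have hi1set : i + 1 ∉ r.set c v := by
            intro h
            rcases List.mem_or_eq_of_mem_set h with h | h
            · exact hi1r h
            · exact hvi1 h.symm
          simp only [bump, hf, hgd, rowOf_cons, if_neg hinotset, if_neg hi1set,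
            if_pos hir, if_neg hi1r, h0]
          omega
      · by_cases hai1 : r[c] = i + 1
        · -- the bumped value is `i + 1`
          have hi1r : i + 1 ∈ r := hai1 ▸ hra
          have hi1rs : i + 1 ∉ rs.flatten := fun h => hdisj (hai1 ▸ hra) h
          have hvlt : v < i + 1 := hai1 ▸ hcv
          have hvlti : v < i := by omega
          have hirnot : i ∉ r := by
            intro hirmem
            obtain ⟨j, hj, hji⟩ := List.mem_iff_getElem.1 hirmem
            rcases lt_trichotomy j c with h | h | h
            · have := hlow j h
              omega
            · subst h; omega
            · have : r[c] < r[j] := by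
                have := List.pairwise_iff_get.1 hsr ⟨c, hc⟩ ⟨j, hj⟩ (by simpa using h)
                simpa using this
              omega
          have hirs : i ∈ rs.flatten := hi.resolve_left hirnot
          have hi1set : i + 1 ∉ r.set c v := by
            have := not_mem_set_self (v := v) hndr hc (hai1 ▸ hvi1)
            rwa [hai1] at this
          have hiset : i ∉ r.set c v := by
            intro h
            rcases List.mem_or_eq_of_mem_set h with h | h
            · exact hirnot h
            · exact hvi h.symm
          have h0 : rowOf (bump rs r[c]).1 (i + 1) = 0 := by
            rw [hai1]; exact rowOf_bump_self rs (i + 1)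
          simp only [bump, hf, hgd, rowOf_cons, if_neg hiset, if_neg hi1set,
            if_neg hirnot, if_pos hi1r, h0]
          omega
        · -- the bumped value is neither `i` nor `i + 1`
          have hset_i : ∀ k, k ≠ v → k ≠ r[c] → (k ∈ r.set c v ↔ k ∈ r) :=
            fun k h1 h2 => mem_set_iff hc h1 h2
          have hmi : i ∈ r.set c v ↔ i ∈ r :=
            hset_i i (Ne.symm hvi) (fun h => hai h.symm)
          have hmi1 : i + 1 ∈ r.set c v ↔ i + 1 ∈ r :=
            hset_i (i + 1) (Ne.symm hvi1) (fun h => hai1 h.symm)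
          rcases hi with hir | hirs <;> rcases hi1 with hi1r | hi1rs
          · simp [bump, hf, hgd, rowOf_cons, hmi.2 hir, hmi1.2 hi1r, hir, hi1r]
          · have hi1rnot : i + 1 ∉ r := fun h => hdisj h hi1rs
            have : i + 1 ∉ r.set c v := fun h => hi1rnot (hmi1.1 h)
            simp [bump, hf, hgd, rowOf_cons, hmi.2 hir, this, hir, hi1rnot]
          · have hirnot : i ∉ r := fun h => hdisj h hirs
            have : i ∉ r.set c v := fun h => hirnot (hmi.1 h)
            simp [bump, hf, hgd, rowOf_cons, this, hmi1.2 hi1r, hirnot, hi1r]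
          · have hirnot : i ∉ r := fun h => hdisj h hirs
            have hi1rnot : i + 1 ∉ r := fun h => hdisj h hi1rs
            have hs1 : i ∉ r.set c v := fun h => hirnot (hmi.1 h)
            have hs2 : i + 1 ∉ r.set c v := fun h => hi1rnot (hmi1.1 h)
            have harc_i : r[c] ≠ i := hai
            have harc_i1 : r[c] ≠ i + 1 := hai1
            have harcrs : r[c] ∉ rs.flatten := fun h => hdisj hra h
            have hIH := ih r[c] hsrs hndrs harcrs harc_i harc_i1 hirs hi1rs
            simp only [bump, hf, hgd, rowOf_cons, if_neg hs1, if_neg hs2,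
              if_neg hirnot, if_neg hi1rnot]
            omega

end Stmt14Aux
namespace Stmt14Aux
open List

/-- Iterated row insertion of a word. -/
def insw (L : List ℕ) : List (List ℕ) := L.foldl (fun rows v => (bump rows v).1) []

lemma insw_append (L : List ℕ) (v : ℕ) : insw (L ++ [v]) = (bump (insw L) v).1 :=
  List.foldl_concat _ _ _ _

lemma insw_inv (L : List ℕ) (h : L.Nodup) :
    (∀ r ∈ insw L, List.Pairwise (· < ·) r) ∧ (insw L).flatten.Perm L := by
  induction L using List.reverseRecOn with
  | nil =>
    constructor
    · intro r hr; simp [insw] at hr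
    · exact List.Perm.nil
  | append_singleton L v ihL =>
    obtain ⟨hLnd, -, hdisj⟩ := List.nodup_append'.1 h
    have hvL : v ∉ L := fun hm => hdisj hm (List.mem_singleton_self v)
    obtain ⟨hsort, hperm⟩ := ihL hLnd
    have hvj : v ∉ (insw L).flatten := fun hm => hvL (hperm.mem_iff.1 hm)
    have hjnd : (insw L).flatten.Nodup := hperm.nodup_iff.2 hLnd
    rw [insw_append]
    constructor
    · exact bump_sorted hsort hjnd hvj
    · refine (bump_join_perm (insw L) v).trans ?_
      refine (hperm.cons v).trans ?_
      simpa using (List.perm_middle (a := v) (l₁ := L) (l₂ := [])).symm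

/-- The main word-level statement: `i` lies strictly above `i+1` in the
insertion tableau iff `i+1` precedes `i` in the word. -/
lemma main_word (L : List ℕ) (h : L.Nodup) (i : ℕ) (hi : i ∈ L) (hi1 : i + 1 ∈ L) :
    (rowOf (insw L) i < rowOf (insw L) (i + 1) ↔ L.idxOf (i + 1) < L.idxOf i) := by
  induction L using List.reverseRecOn with
  | nil => simp at hi
  | append_singleton L v ihL =>
    obtain ⟨hLnd, -, hdisj⟩ := List.nodup_append'.1 h
    have hvL : v ∉ L := fun hm => hdisj hm (List.mem_singleton_self v)
    obtain ⟨hsort, hperm⟩ := insw_inv L hLnd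
    have hjoin : ∀ k, k ∈ (insw L).flatten ↔ k ∈ L := fun k => hperm.mem_iff
    have hjnd : (insw L).flatten.Nodup := hperm.nodup_iff.2 hLnd
    rw [insw_append]
    rcases eq_or_ne v i with rfl | hvi
    · -- the last letter is `i`
      have hi1L : v + 1 ∈ L := by
        rcases List.mem_append.1 hi1 with h' | h'
        · exact h'
        · rw [List.mem_singleton] at h'; omega
      have h0 : rowOf (bump (insw L) v).1 v = 0 := rowOf_bump_self _ _
      have h1 : 1 ≤ rowOf (bump (insw L) v).1 (v + 1) :=
        one_le_rowOf_bump _ _ hsort (fun hm => hvL ((hjoin v).1 hm))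
      have hidx1 : (L ++ [v]).idxOf (v + 1) = L.idxOf (v + 1) :=
        List.idxOf_append_of_mem hi1L
      have hidx2 : (L ++ [v]).idxOf v = L.length := by
        rw [List.idxOf_append_of_notMem hvL]; simp
      have hlt : L.idxOf (v + 1) < L.length := List.idxOf_lt_length_iff.2 hi1L
      rw [h0, hidx1, hidx2]
      omega
    rcases eq_or_ne v (i + 1) with rfl | hvi1
    · -- the last letter is `i + 1`
      have hiL : i ∈ L := by
        rcases List.mem_append.1 hi with h' | h'
        · exact h'
        · rw [List.mem_singleton] at h'; omega
      have h0 : rowOf (bump (insw L) (i + 1)).1 (i + 1) = 0 := rowOf_bump_self _ _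
      have hidx1 : (L ++ [i + 1]).idxOf (i + 1) = L.length := by
        rw [List.idxOf_append_of_notMem hvL]; simp
      have hidx2 : (L ++ [i + 1]).idxOf i = L.idxOf i :=
        List.idxOf_append_of_mem hiL
      have hlt : L.idxOf i < L.length := List.idxOf_lt_length_iff.2 hiL
      rw [h0, hidx1, hidx2]
      omega
    · -- the last letter is neither `i` nor `i + 1`
      have hiL : i ∈ L := by
        rcases List.mem_append.1 hi with h' | h'
        · exact h'
        · rw [List.mem_singleton] at h'; exact absurd h'.symm hvi
      have hi1L : i + 1 ∈ L := by
        rcases List.mem_append.1 hi1 with h' | h'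
        · exact h'
        · rw [List.mem_singleton] at h'; exact absurd h'.symm hvi1
      have hpres := bump_pres (insw L) v i hsort hjnd
        (fun hm => hvL ((hjoin v).1 hm)) hvi hvi1
        ((hjoin i).2 hiL) ((hjoin (i + 1)).2 hi1L)
      rw [List.idxOf_append_of_mem hiL, List.idxOf_append_of_mem hi1L, hpres]
      exact ihL hLnd hiL hi1L

end Stmt14Aux
namespace Stmt14Aux
open List

lemma RSrows_fst {n : ℕ} (x : Equiv.Perm (Fin n)) :
    (RSrows x).1 = insw ((List.finRange n).map (fun k => (x k : ℕ))) := by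
  have key : ∀ (L : List (Fin n)) (P Q : List (List ℕ)),
      (L.foldl (fun PQ k =>
        let out := bump PQ.1 (x k : ℕ)
        (out.1, addAt PQ.2 out.2 (k : ℕ))) (P, Q)).1
      = L.foldl (fun p k => (bump p (x k : ℕ)).1) P := by
    intro L
    induction L with
    | nil => intro P Q; rfl
    | cons a L ih => intro P Q; simp only [List.foldl_cons]; exact ih _ _
  rw [RSrows, key, insw, List.foldl_map]

lemma word_nodup {n : ℕ} (x : Equiv.Perm (Fin n)) :
    ((List.finRange n).map (fun k => (x k : ℕ))).Nodup :=
  List.Nodup.map (fun a b hab => x.injective (Fin.val_injective hab))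
    (List.nodup_finRange n)

lemma word_length {n : ℕ} (x : Equiv.Perm (Fin n)) :
    ((List.finRange n).map (fun k => (x k : ℕ))).length = n := by
  simp

lemma word_getElem {n : ℕ} (x : Equiv.Perm (Fin n)) (j : ℕ) (hj : j < n) :
    ((List.finRange n).map (fun k => (x k : ℕ)))[j]'(by simpa using hj)
      = (x ⟨j, hj⟩ : ℕ) := by
  rw [List.getElem_map]
  congr 1
  congr 1
  rw [List.getElem_finRange]
  rfl

lemma word_indexOf {n : ℕ} (x : Equiv.Perm (Fin n)) (i : ℕ) (h : i < n) :
    ((List.finRange n).map (fun k => (x k : ℕ))).idxOf i = (x⁻¹ ⟨i, h⟩ : ℕ) := by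
  have hjlt : ((x⁻¹ ⟨i, h⟩ : Fin n) : ℕ) < n := (x⁻¹ ⟨i, h⟩).isLt
  have hj : ((x⁻¹ ⟨i, h⟩ : Fin n) : ℕ) <
      ((List.finRange n).map (fun k => (x k : ℕ))).length := by simpa using hjlt
  have hval : ((List.finRange n).map (fun k => (x k : ℕ)))[((x⁻¹ ⟨i, h⟩ : Fin n) : ℕ)]'hj
      = i := by
    rw [word_getElem x _ hjlt]
    have heq : (⟨((x⁻¹ ⟨i, h⟩ : Fin n) : ℕ), hjlt⟩ : Fin n) = x⁻¹ ⟨i, h⟩ :=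
      Fin.ext rfl
    rw [heq]
    simp
  conv_lhs => rw [← hval]
  exact (word_nodup x).idxOf_getElem _ hj

lemma word_mem {n : ℕ} (x : Equiv.Perm (Fin n)) (i : ℕ) (h : i < n) :
    i ∈ (List.finRange n).map (fun k => (x k : ℕ)) := by
  rw [← List.idxOf_lt_length_iff, word_indexOf x i h, word_length]
  exact (x⁻¹ ⟨i, h⟩).isLt

end Stmt14Aux

open Stmt14Aux

/-- For every permutation `x` and every simple transposition,
`s_i ∈ τ(x)` iff `s_i ∈ τ(P(x))`; hence `τ(x) = τ(P(x))`. -/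
theorem stmt14 {n : ℕ} (x : Equiv.Perm (Fin n)) :
    (∀ i, i + 1 < n → (i ∈ tauSn x ↔ i ∈ tauYT n (Ptab x))) ∧
    tauSn x = tauYT n (Ptab x) := by
  have main : ∀ i, i + 1 < n → (i ∈ tauSn x ↔ i ∈ tauYT n (Ptab x)) := by
    intro i hi1n
    have hin : i < n := Nat.lt_of_succ_lt hi1n
    have hmemi : i ∈ (List.finRange n).map (fun k => (x k : ℕ)) := word_mem x i hin
    have hmemi1 : i + 1 ∈ (List.finRange n).map (fun k => (x k : ℕ)) :=
      word_mem x (i + 1) hi1n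
    have hmw := main_word _ (word_nodup x) i hmemi hmemi1
    have hP : ∀ k, (Ptab x k).1
        = rowOf (insw ((List.finRange n).map (fun k => (x k : ℕ)))) k := by
      intro k
      show (posIn (RSrows x).1 k).1 = _
      rw [posIn_fst, RSrows_fst]
    constructor
    · rintro ⟨h, hlt⟩
      refine ⟨hi1n, ?_⟩
      rw [hP i, hP (i + 1), hmw, word_indexOf x (i + 1) hi1n, word_indexOf x i hin]
      exact Fin.lt_def.1 hlt
    · rintro ⟨-, hlt⟩
      rw [hP i, hP (i + 1), hmw, word_indexOf x (i + 1) hi1n,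
        word_indexOf x i hin] at hlt
      exact ⟨hi1n, Fin.lt_def.2 hlt⟩
  refine ⟨main, ?_⟩
  ext i
  by_cases h : i + 1 < n
  · exact main i h
  · constructor
    · rintro ⟨h', -⟩; exact absurd h' h
    · rintro ⟨h', -⟩; exact absurd h' h
end
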